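/- Let x, y ∈ ℝ^N be nonzero with angle θ(x,y) = arccos(⟨x,y⟩/(‖x‖‖y‖)). If x and y both lie in a closed convex cone C generated by unit vectors φ_1,...,φ_r (i.e., every element of C is a nonnegative combination of the φ_i), and θ_max = max_{i,j} θ(φ_i, φ_j) < π/2, then θ(x, y) ≤ θ_max. -/

import Mathlib

theorem stmt18 (N r : ℕ) (φ : Fin r → EuclideanSpace ℝ (Fin N))
    (hφ : ∀ i, ‖φ i‖ = 1) (θmax : ℝ) (hθ0 : 0 ≤ θmax) (hθ : θmax < Real.pi / 2)
    (hpair : ∀ i j, Real.cos θmax ≤ (inner ℝ (φ i) (φ j) : ℝ))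
    (C : Set (EuclideanSpace ℝ (Fin N)))
    (hC : C = {x | ∃ ω : Fin r → ℝ, (∀ i, 0 ≤ ω i) ∧ x = ∑ i, ω i • φ i})
    (x y : EuclideanSpace ℝ (Fin N)) (hx : x ∈ C) (hy : y ∈ C)
    (hx0 : x ≠ 0) (hy0 : y ≠ 0) :
    Real.arccos ((inner ℝ x y : ℝ) / (‖x‖ * ‖y‖)) ≤ θmax := by
  subst hC
  obtain ⟨ω, hω0, hωx⟩ := hx
  obtain ⟨η, hη0, hηy⟩ := hy
  have hcos : 0 < Real.cos θmax :=
    Real.cos_pos_of_mem_Ioo ⟨by linarith [Real.pi_pos], hθ⟩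
  have hxn : 0 < ‖x‖ := norm_pos_iff.mpr hx0
  have hyn : 0 < ‖y‖ := norm_pos_iff.mpr hy0
  -- norm bounds
  have hxle : ‖x‖ ≤ ∑ i, ω i := by
    calc ‖x‖ ≤ ∑ i, ‖ω i • φ i‖ := hωx ▸ norm_sum_le _ _
      _ = ∑ i, ω i := by
        refine Finset.sum_congr rfl fun i _ => ?_
        rw [norm_smul, hφ i, mul_one, Real.norm_eq_abs, abs_of_nonneg (hω0 i)]
  have hyle : ‖y‖ ≤ ∑ i, η i := by
    calc ‖y‖ ≤ ∑ i, ‖η i • φ i‖ := hηy ▸ norm_sum_le _ _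
      _ = ∑ i, η i := by
        refine Finset.sum_congr rfl fun i _ => ?_
        rw [norm_smul, hφ i, mul_one, Real.norm_eq_abs, abs_of_nonneg (hη0 i)]
  have hsx : 0 < ∑ i, ω i := lt_of_lt_of_le hxn hxle
  have hsy : 0 < ∑ i, η i := lt_of_lt_of_le hyn hyle
  -- inner product expansion and bound
  have hinner : (inner ℝ x y : ℝ) = ∑ i, ∑ j, ω i * η j * (inner ℝ (φ i) (φ j) : ℝ) := by
    rw [hωx, hηy, sum_inner]
    refine Finset.sum_congr rfl fun i _ => ?_
    rw [inner_sum]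
    refine Finset.sum_congr rfl fun j _ => ?_
    rw [real_inner_smul_left, real_inner_smul_right]; ring
  have hbound : Real.cos θmax * ((∑ i, ω i) * (∑ j, η j)) ≤ (inner ℝ x y : ℝ) := by
    rw [hinner, Finset.sum_mul_sum, Finset.mul_sum]
    refine Finset.sum_le_sum fun i _ => ?_
    rw [Finset.mul_sum]
    refine Finset.sum_le_sum fun j _ => ?_
    have := hpair i j
    have hnn : 0 ≤ ω i * η j := mul_nonneg (hω0 i) (hη0 j)
    nlinarith
  have key : Real.cos θmax ≤ (inner ℝ x y : ℝ) / (‖x‖ * ‖y‖) := by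
    rw [le_div_iff₀ (by positivity)]
    calc Real.cos θmax * (‖x‖ * ‖y‖) ≤ Real.cos θmax * ((∑ i, ω i) * (∑ j, η j)) := by
          apply mul_le_mul_of_nonneg_left _ hcos.le
          exact mul_le_mul hxle hyle hyn.le hsx.le
      _ ≤ _ := hbound
  calc Real.arccos ((inner ℝ x y : ℝ) / (‖x‖ * ‖y‖))
      ≤ Real.arccos (Real.cos θmax) := by
        unfold Real.arccos
        exact sub_le_sub_left (Real.monotone_arcsin key) _
    _ = θmax := Real.arccos_cos hθ0 (by linarith [Real.pi_pos])
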